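/- Fix d ≥ 1, γ ∈ (0,1], σ > 0 and f ∈ ℝ^d. Let q₀ : ℝ^d → [0,∞) be measurable and satisfy q₀(y₀) ≤ c₁ exp(−c₂ ‖y₀‖²/2) for all y₀ ∈ ℝ^d, for constants c₁, c₂ > 0. Define q(y) = (σ^d (2π)^{d/2})^{-1} ∫_{ℝ^d} q₀(y₀) exp( −‖ y − γ y₀ − (1−γ) f ‖² / (2σ²) ) dy₀. Then for every y ∈ ℝ^d: q(y) ≤ c₁ (γ² + c₂ σ²)^{−d/2} exp( −c₂ ‖ y − (1−γ) f ‖² / ( 2 (γ² + c₂ σ²) ) ). -/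

import Mathlib

open MeasureTheory

lemma exp_ident_aux (d : ℕ) (γ σ c₂ : ℝ) (hσ : 0 < σ) (hA : (0:ℝ) < γ ^ 2 + c₂ * σ ^ 2)
    (z y₀ : EuclideanSpace ℝ (Fin d)) :
    -c₂ * ‖y₀‖ ^ 2 / 2 + -‖z - γ • y₀‖ ^ 2 / (2 * σ ^ 2) =
      -((γ ^ 2 + c₂ * σ ^ 2) / (2 * σ ^ 2)) * ‖y₀ - (γ / (γ ^ 2 + c₂ * σ ^ 2)) • z‖ ^ 2
        + -c₂ * ‖z‖ ^ 2 / (2 * (γ ^ 2 + c₂ * σ ^ 2)) := by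
  rw [norm_sub_sq_real, norm_sub_sq_real, norm_smul, norm_smul, real_inner_smul_right,
    real_inner_smul_right]
  simp only [Real.norm_eq_abs, mul_pow, sq_abs]
  rw [real_inner_comm y₀ z]
  field_simp
  ring

lemma integrable_rexp_neg_mul_sq_norm_aux (d : ℕ) {b : ℝ} (hb : 0 < b) :
    Integrable (fun v : EuclideanSpace ℝ (Fin d) => Real.exp (-b * ‖v‖ ^ 2)) := by
  have h := GaussianFourier.integrable_cexp_neg_mul_sq_norm_add (V := EuclideanSpace ℝ (Fin d))
    (b := (b : ℂ)) (by simpa using hb) 0 0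
  simp only [zero_mul, add_zero] at h
  have := h.re
  simpa [← Complex.ofReal_pow, ← Complex.ofReal_mul, ← Complex.ofReal_neg,
    ← Complex.ofReal_exp] using this

/-- Upper bound of Lemma 1 of the paper: if the original conditional density `q₀` has a
Gaussian light tail `q₀(y₀) ≤ c₁ e^{−c₂‖y₀‖²/2}`, then the diffused conditional density
`q(y) = (σ^d (2π)^{d/2})⁻¹ ∫ q₀(y₀) e^{−‖y−γy₀−(1−γ)f‖²/(2σ²)} dy₀` satisfies
`q(y) ≤ c₁ (γ²+c₂σ²)^{−d/2} e^{−c₂‖y−(1−γ)f‖²/(2(γ²+c₂σ²))}`. -/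
theorem diffused_density_upper_bound
    (d : ℕ) (hd : 1 ≤ d) (γ σ : ℝ) (hγ : γ ∈ Set.Ioc (0:ℝ) 1) (hσ : 0 < σ)
    (f : EuclideanSpace ℝ (Fin d))
    (q₀ : EuclideanSpace ℝ (Fin d) → ℝ)
    (hq₀m : Measurable q₀) (hq₀nn : ∀ y₀, 0 ≤ q₀ y₀)
    (c₁ c₂ : ℝ) (hc₁ : 0 < c₁) (hc₂ : 0 < c₂)
    (htail : ∀ y₀, q₀ y₀ ≤ c₁ * Real.exp (-c₂ * ‖y₀‖ ^ 2 / 2))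
    (q : EuclideanSpace ℝ (Fin d) → ℝ)
    (hq : ∀ y, q y = (σ ^ d * (2 * Real.pi) ^ ((d : ℝ) / 2))⁻¹ *
        ∫ y₀, q₀ y₀ * Real.exp (-‖y - γ • y₀ - (1 - γ) • f‖ ^ 2 / (2 * σ ^ 2))) :
    ∀ y, q y ≤ c₁ * (γ ^ 2 + c₂ * σ ^ 2) ^ (-(d : ℝ) / 2) *
        Real.exp (-c₂ * ‖y - (1 - γ) • f‖ ^ 2 / (2 * (γ ^ 2 + c₂ * σ ^ 2))) := by
  intro y
  obtain ⟨hγ0, hγ1⟩ := hγ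
  set A : ℝ := γ ^ 2 + c₂ * σ ^ 2 with hAdef
  have hA : (0:ℝ) < A := by positivity
  set z : EuclideanSpace ℝ (Fin d) := y - (1 - γ) • f with hz
  set m : EuclideanSpace ℝ (Fin d) := (γ / A) • z with hm
  set b : ℝ := A / (2 * σ ^ 2) with hb
  have hbpos : 0 < b := by positivity
  set E : ℝ := Real.exp (-c₂ * ‖z‖ ^ 2 / (2 * A)) with hE
  -- pointwise bound on the integrand
  have hpt : ∀ y₀ : EuclideanSpace ℝ (Fin d),
      q₀ y₀ * Real.exp (-‖y - γ • y₀ - (1 - γ) • f‖ ^ 2 / (2 * σ ^ 2)) ≤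
        c₁ * E * Real.exp (-b * ‖y₀ - m‖ ^ 2) := by
    intro y₀
    have hshift : y - γ • y₀ - (1 - γ) • f = z - γ • y₀ := by
      rw [hz]; abel
    rw [hshift]
    calc q₀ y₀ * Real.exp (-‖z - γ • y₀‖ ^ 2 / (2 * σ ^ 2))
        ≤ (c₁ * Real.exp (-c₂ * ‖y₀‖ ^ 2 / 2)) *
            Real.exp (-‖z - γ • y₀‖ ^ 2 / (2 * σ ^ 2)) := by
          exact mul_le_mul_of_nonneg_right (htail y₀) (Real.exp_nonneg _)
      _ = c₁ * Real.exp (-c₂ * ‖y₀‖ ^ 2 / 2 + -‖z - γ • y₀‖ ^ 2 / (2 * σ ^ 2)) := by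
          rw [mul_assoc, ← Real.exp_add]
      _ = c₁ * E * Real.exp (-b * ‖y₀ - m‖ ^ 2) := by
          rw [exp_ident_aux d γ σ c₂ hσ hA z y₀, hE, hm, hb, Real.exp_add]
          ring
  -- integrability of the dominating function
  have hint : Integrable (fun y₀ : EuclideanSpace ℝ (Fin d) =>
      c₁ * E * Real.exp (-b * ‖y₀ - m‖ ^ 2)) := by
    exact ((integrable_rexp_neg_mul_sq_norm_aux d hbpos).comp_sub_right m).const_mul _
  -- value of the dominating integral
  have hval : ∫ y₀ : EuclideanSpace ℝ (Fin d), Real.exp (-b * ‖y₀ - m‖ ^ 2) =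
      (Real.pi / b) ^ ((d : ℝ) / 2) := by
    rw [integral_sub_right_eq_self (fun v : EuclideanSpace ℝ (Fin d) =>
      Real.exp (-b * ‖v‖ ^ 2)) m]
    rw [GaussianFourier.integral_rexp_neg_mul_sq_norm hbpos]
    norm_num [finrank_euclideanSpace_fin]
  -- monotonicity of integral
  have hmono : (∫ y₀, q₀ y₀ * Real.exp (-‖y - γ • y₀ - (1 - γ) • f‖ ^ 2 / (2 * σ ^ 2))) ≤
      c₁ * E * (Real.pi / b) ^ ((d : ℝ) / 2) := by
    have := integral_mono_of_nonneg
      (f := fun y₀ : EuclideanSpace ℝ (Fin d) =>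
        q₀ y₀ * Real.exp (-‖y - γ • y₀ - (1 - γ) • f‖ ^ 2 / (2 * σ ^ 2)))
      (g := fun y₀ : EuclideanSpace ℝ (Fin d) => c₁ * E * Real.exp (-b * ‖y₀ - m‖ ^ 2))
      (Filter.Eventually.of_forall fun y₀ => mul_nonneg (hq₀nn y₀) (Real.exp_nonneg _))
      hint (Filter.Eventually.of_forall hpt)
    calc (∫ y₀, q₀ y₀ * Real.exp (-‖y - γ • y₀ - (1 - γ) • f‖ ^ 2 / (2 * σ ^ 2)))
        ≤ ∫ y₀, c₁ * E * Real.exp (-b * ‖y₀ - m‖ ^ 2) := this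
      _ = c₁ * E * (Real.pi / b) ^ ((d : ℝ) / 2) := by
          rw [integral_const_mul, hval]
  -- final computation
  have hCpos : (0:ℝ) < σ ^ d * (2 * Real.pi) ^ ((d : ℝ) / 2) := by
    have : (0:ℝ) < (2 * Real.pi) ^ ((d : ℝ) / 2) := Real.rpow_pos_of_pos (by positivity) _
    positivity
  have hkey : (σ ^ d * (2 * Real.pi) ^ ((d : ℝ) / 2))⁻¹ * (Real.pi / b) ^ ((d : ℝ) / 2)
      = A ^ (-(d : ℝ) / 2) := by
    have h1 : Real.pi / b = (2 * Real.pi) * σ ^ 2 / A := by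
      rw [hb]; field_simp
    have h2 : ((2 * Real.pi) * σ ^ 2 / A) ^ ((d : ℝ) / 2) =
        (2 * Real.pi) ^ ((d : ℝ) / 2) * (σ ^ 2) ^ ((d : ℝ) / 2) * A ^ (-(d : ℝ) / 2) := by
      rw [div_eq_mul_inv, Real.mul_rpow (by positivity) (by positivity),
        Real.mul_rpow (by positivity) (by positivity),
        Real.inv_rpow hA.le, ← Real.rpow_neg hA.le, neg_div]
    have h3 : (σ ^ 2 : ℝ) ^ ((d : ℝ) / 2) = σ ^ d := by
      rw [← Real.rpow_natCast σ 2, ← Real.rpow_mul hσ.le, ← Real.rpow_natCast σ d]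
      congr 1
      push_cast
      ring
    rw [h1, h2, h3]
    field_simp
  rw [hq y]
  calc (σ ^ d * (2 * Real.pi) ^ ((d : ℝ) / 2))⁻¹ *
        ∫ y₀, q₀ y₀ * Real.exp (-‖y - γ • y₀ - (1 - γ) • f‖ ^ 2 / (2 * σ ^ 2))
      ≤ (σ ^ d * (2 * Real.pi) ^ ((d : ℝ) / 2))⁻¹ *
          (c₁ * E * (Real.pi / b) ^ ((d : ℝ) / 2)) :=
        mul_le_mul_of_nonneg_left hmono (inv_nonneg.mpr hCpos.le)
    _ = c₁ * A ^ (-(d : ℝ) / 2) * E := by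
        rw [← hkey]; ring
    _ = c₁ * (γ ^ 2 + c₂ * σ ^ 2) ^ (-(d : ℝ) / 2) *
          Real.exp (-c₂ * ‖y - (1 - γ) • f‖ ^ 2 / (2 * (γ ^ 2 + c₂ * σ ^ 2))) := by
        rw [hE, hz, hAdef]
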